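/- arXiv:2301.01152 — 2 statements merged into one kernel-verified Lean document; each statement's English description precedes it below -/
import Mathlib

section
/- Knight graph on a 2×s twine: for s ≥ 2, the knight graph on the board [0,s−1]×{0,1} is the disjoint union of four paths, two spanning ⌊s/2⌋ cells each and two spanning ⌈s/2⌉ cells each. -/
open SimpleGraph

abbrev Cell : Type := ℤ × ℤ

def sqBoard (n : ℕ) : Set Cell :=
  {a | 0 ≤ a.1 ∧ a.1 ≤ (n : ℤ) - 1 ∧ 0 ≤ a.2 ∧ a.2 ≤ (n : ℤ) - 1}

/-- The king graph on the standard `n × n` board. -/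
def kingGraph (n : ℕ) : SimpleGraph Cell where
  Adj a b := a ≠ b ∧ a ∈ sqBoard n ∧ b ∈ sqBoard n ∧ |a.1 - b.1| ≤ 1 ∧ |a.2 - b.2| ≤ 1
  symm := by
    constructor
    rintro a b ⟨h1, h2, h3, h4, h5⟩
    exact ⟨h1.symm, h3, h2, by rwa [abs_sub_comm], by rwa [abs_sub_comm]⟩
  loopless := by constructor; rintro a ⟨h, -⟩; exact h rfl

def board (m n : ℕ) : Set Cell :=
  {a | 0 ≤ a.1 ∧ a.1 ≤ (n : ℤ) - 1 ∧ 0 ≤ a.2 ∧ a.2 ≤ (m : ℤ) - 1}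

/-- The grid graph on the standard `m × n` board (m rows, n columns). -/
def gridGraph (m n : ℕ) : SimpleGraph Cell where
  Adj a b := a ∈ board m n ∧ b ∈ board m n ∧ |a.1 - b.1| + |a.2 - b.2| = 1
  symm := by
    constructor
    rintro a b ⟨h1, h2, h3⟩
    refine ⟨h2, h1, ?_⟩
    rw [abs_sub_comm b.1 a.1, abs_sub_comm b.2 a.2]
    exact h3
  loopless := by constructor; rintro a ⟨-, -, h⟩; simp at h

/-- A snake path: a path which is an induced subgraph. -/
def IsSnake {V : Type*} (G : SimpleGraph V) {a b : V} (p : G.Walk a b) : Prop :=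
  p.IsPath ∧ ∀ u ∈ p.support, ∀ v ∈ p.support, G.Adj u v → s(u, v) ∈ p.edges

/-- The walk `p` makes a turn at `c` : it traverses a horizontal and a vertical edge at `c`. -/
def TurnsAt {G : SimpleGraph Cell} {a b : Cell} (p : G.Walk a b) (c : Cell) : Prop :=
  ∃ u v : Cell, u ≠ v ∧ s(u, c) ∈ p.edges ∧ s(c, v) ∈ p.edges ∧
    ((u.2 = c.2 ∧ v.1 = c.1) ∨ (u.1 = c.1 ∧ v.2 = c.2))

noncomputable def turnCount {G : SimpleGraph Cell} {a b : Cell} (p : G.Walk a b) : ℕ :=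
  Set.ncard {c : Cell | TurnsAt p c}

/-- The walk `p` goes straight through `c`. -/
def GoesStraight {G : SimpleGraph Cell} {a b : Cell} (p : G.Walk a b) (c : Cell) : Prop :=
  ∃ u v : Cell, u ≠ v ∧ s(u, c) ∈ p.edges ∧ s(c, v) ∈ p.edges ∧
    ((u.2 = c.2 ∧ v.2 = c.2) ∨ (u.1 = c.1 ∧ v.1 = c.1))

/-- `p` is a Hamiltonian path on the vertex set `S`. -/
def IsHamOn {V : Type*} {G : SimpleGraph V} (S : Set V) {a b : V} (p : G.Walk a b) : Prop :=
  p.IsPath ∧ ∀ v, v ∈ S ↔ v ∈ p.support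

/-- The 4-cycle `a'—a''—b'—b''—a'` of the grid graph is free relative to `p`. -/
def FreeCycle {k : ℕ} {a b : Cell} (p : (gridGraph k k).Walk a b)
    (a' a'' b' b'' : Cell) : Prop :=
  (gridGraph k k).Adj a' a'' ∧ (gridGraph k k).Adj a'' b' ∧
  (gridGraph k k).Adj b' b'' ∧ (gridGraph k k).Adj b'' a' ∧
  s(a', a'') ∈ p.edges ∧ s(a'', b') ∉ p.edges ∧
  s(b', b'') ∉ p.edges ∧ s(b'', a') ∉ p.edges ∧
  GoesStraight p a' ∧ GoesStraight p a'' ∧ TurnsAt p b' ∧ TurnsAt p b''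

/-- The 2×s twine board. -/
def twine (s : ℕ) : Set Cell := {a | 0 ≤ a.1 ∧ a.1 ≤ (s : ℤ) - 1 ∧ (a.2 = 0 ∨ a.2 = 1)}

/-- The knight graph on the 2×s twine. -/
def knightTwine (s : ℕ) : SimpleGraph Cell where
  Adj a b := a ∈ twine s ∧ b ∈ twine s ∧
    ((|a.1 - b.1| = 1 ∧ |a.2 - b.2| = 2) ∨ (|a.1 - b.1| = 2 ∧ |a.2 - b.2| = 1))
  symm := by
    constructor
    rintro a b ⟨h1, h2, h3⟩
    refine ⟨h2, h1, ?_⟩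
    rw [abs_sub_comm b.1 a.1, abs_sub_comm b.2 a.2]
    exact h3
  loopless := by constructor; rintro a ⟨-, -, h⟩; simp at h

def fnc (c : Cell) (i : ℕ) : Cell := (c.1 + 2*(i:ℤ), if i % 2 = 0 then c.2 else 1 - c.2)

def stepc (c : Cell) : Cell := (c.1 + 2, 1 - c.2)

lemma fnc_zero (c : Cell) : fnc c 0 = c := by simp [fnc]

lemma fnc_step (c : Cell) (i : ℕ) : fnc (stepc c) i = fnc c (i+1) := by
  unfold fnc stepc
  refine Prod.ext ?_ ?_
  · push_cast; ring
  · rcases Nat.mod_two_eq_zero_or_one i with h | h <;>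
      simp [h, Nat.add_mod, -Nat.add_mod_right] <;> ring

lemma stepc_fnc (c : Cell) (i : ℕ) : stepc (fnc c i) = fnc c (i+1) := by
  unfold fnc stepc
  refine Prod.ext ?_ ?_
  · push_cast; ring
  · rcases Nat.mod_two_eq_zero_or_one i with h | h <;>
      simp [h, Nat.add_mod, -Nat.add_mod_right] <;> ring

lemma adj_step (s : ℕ) (c : Cell) (h0 : 0 ≤ c.1) (h1 : c.1 + 2 ≤ (s:ℤ)-1)
    (h2 : c.2 = 0 ∨ c.2 = 1) : (knightTwine s).Adj c (stepc c) := by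
  refine ⟨⟨h0, by omega, h2⟩, ⟨by simp [stepc]; omega, by simp [stepc]; omega,
    by rcases h2 with h | h <;> simp [stepc, h]⟩, Or.inr ⟨?_, ?_⟩⟩
  · simp [stepc]
  · rcases h2 with h | h <;> simp [stepc, h]

def mkWalk (s : ℕ) : (n : ℕ) → (c : Cell) → 0 ≤ c.1 → c.1 + 2*(n:ℤ) ≤ (s:ℤ)-1 →
    (c.2 = 0 ∨ c.2 = 1) → (knightTwine s).Walk c (fnc c n)
  | 0, c, _, _, _ => Walk.nil.copy rfl (fnc_zero c).symm
  | (n+1), c, h0, h1, h2 =>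
    (Walk.cons (adj_step s c h0 (by push_cast at h1 ⊢; omega) h2)
      (mkWalk s n (stepc c) (by simp only [stepc]; omega)
        (by simp only [stepc]; push_cast at h1 ⊢; omega)
        (by rcases h2 with h | h <;> simp [stepc, h]))).copy rfl (fnc_step c n)

lemma support_mkWalk (s n : ℕ) (c : Cell) (h0 h1 h2) :
    (mkWalk s n c h0 h1 h2).support = (List.range (n+1)).map (fnc c) := by
  induction n generalizing c with
  | zero => rw [List.range_succ]; simp [mkWalk, fnc_zero]
  | succ n ih =>
    rw [mkWalk, Walk.support_copy, Walk.support_cons, ih]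
    conv_rhs => rw [List.range_succ_eq_map]
    rw [List.map_cons, List.map_map, fnc_zero]
    congr 1
    apply List.map_congr_left
    intro i _
    simp [Function.comp, fnc_step]

lemma edge_mem_mkWalk (s n : ℕ) (c : Cell) (h0 h1 h2) (i : ℕ) (hi : i < n) :
    s(fnc c i, fnc c (i+1)) ∈ (mkWalk s n c h0 h1 h2).edges := by
  induction n generalizing c i with
  | zero => omega
  | succ n ih =>
    rw [mkWalk, Walk.edges_copy, Walk.edges_cons]
    rcases i with _ | j
    · have e : s(fnc c 0, fnc c (0+1)) = s(c, stepc c) := by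
        rw [fnc_zero, ← stepc_fnc, fnc_zero]
      rw [e]
      exact List.mem_cons_self
    · apply List.mem_cons_of_mem
      have := ih (stepc c) (by simp only [stepc]; omega)
        (by push_cast at h1 ⊢; simp only [stepc]; omega)
        (by rcases h2 with h | h <;> simp [stepc, h]) j (by omega)
      have e : s(fnc c (j+1), fnc c (j+1+1)) = s(fnc (stepc c) j, fnc (stepc c) (j+1)) := by
        rw [fnc_step, fnc_step]
      rw [e]
      exact this

lemma isPath_mkWalk (s n : ℕ) (c : Cell) (h0 h1 h2) :
    (mkWalk s n c h0 h1 h2).IsPath := by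
  apply Walk.IsPath.mk'
  rw [support_mkWalk]
  refine List.Nodup.map ?_ List.nodup_range
  intro i j hij
  have := congrArg Prod.fst hij
  simp only [fnc] at this
  omega

lemma fnc_mem_twine (s : ℕ) (c : Cell) (i : ℕ) (h0 : 0 ≤ c.1)
    (h1 : c.1 + 2*(i:ℤ) ≤ (s:ℤ)-1) (h2 : c.2 = 0 ∨ c.2 = 1) : fnc c i ∈ twine s := by
  refine ⟨by simp only [fnc]; omega, by simp only [fnc]; omega, ?_⟩
  rcases h2 with h | h <;> simp only [fnc, h] <;> split <;> omega

lemma support_subset_twine (s n : ℕ) (c : Cell) (h0 h1 h2) :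
    ∀ v ∈ (mkWalk s n c h0 h1 h2).support, v ∈ twine s := by
  intro v hv
  rw [support_mkWalk] at hv
  obtain ⟨i, hi, rfl⟩ := List.mem_map.mp hv
  have hin : i ≤ n := by simpa [List.mem_range, Nat.lt_succ_iff] using hi
  exact fnc_mem_twine s c i h0 (by omega) h2

lemma locate (s : ℕ) (u : Cell) (h0 : 0 ≤ u.1) (h1 : u.1 ≤ (s:ℤ)-1)
    (h2 : u.2 = 0 ∨ u.2 = 1) :
    ∃ (c : Cell) (i : ℕ),
      (c = ((1:ℤ),(0:ℤ)) ∨ c = (1,1) ∨ c = (0,0) ∨ c = (0,1)) ∧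
      u = fnc c i ∧ u.1 = c.1 + 2*(i:ℤ) := by
  obtain ⟨k, hk⟩ : ∃ k : ℕ, u.1 = (k:ℤ) := ⟨u.1.toNat, (Int.toNat_of_nonneg h0).symm⟩
  set i := k / 2 with hi
  set c1 : ℤ := ((k % 2 : ℕ) : ℤ) with hc1
  set y0 : ℤ := if i % 2 = 0 then u.2 else 1 - u.2 with hy0
  have hfst : u.1 = c1 + 2*(i:ℤ) := by omega
  refine ⟨(c1, y0), i, ?_, ?_, hfst⟩
  · have hcc : c1 = 0 ∨ c1 = 1 := by omega
    have hyy : y0 = 0 ∨ y0 = 1 := by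
      rcases h2 with h | h <;> rw [hy0] <;> split <;> omega
    rcases hcc with h | h <;> rcases hyy with h' | h' <;>
      simp [h, h', Prod.ext_iff] <;> tauto
  · refine Prod.ext (by simpa [fnc] using hfst) ?_
    simp only [fnc, hy0]
    split <;> omega


/-- for s ≥ 2, the knight graph on the 2×s twine is the disjoint union of
four paths, two on ⌊s/2⌋ cells and two on ⌈s/2⌉ cells. -/
theorem knight_twine_paths (s : ℕ) (hs : 2 ≤ s) :
    ∃ (a1 b1 a2 b2 a3 b3 a4 b4 : Cell)
      (p1 : (knightTwine s).Walk a1 b1) (p2 : (knightTwine s).Walk a2 b2)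
      (p3 : (knightTwine s).Walk a3 b3) (p4 : (knightTwine s).Walk a4 b4),
      p1.IsPath ∧ p2.IsPath ∧ p3.IsPath ∧ p4.IsPath ∧
      (∀ v : Cell, v ∈ twine s ↔
        (v ∈ p1.support ∨ v ∈ p2.support ∨ v ∈ p3.support ∨ v ∈ p4.support)) ∧
      p1.support.Disjoint p2.support ∧ p1.support.Disjoint p3.support ∧
      p1.support.Disjoint p4.support ∧ p2.support.Disjoint p3.support ∧
      p2.support.Disjoint p4.support ∧ p3.support.Disjoint p4.support ∧
      (∀ u v : Cell, (knightTwine s).Adj u v →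
        s(u, v) ∈ p1.edges ∨ s(u, v) ∈ p2.edges ∨ s(u, v) ∈ p3.edges ∨ s(u, v) ∈ p4.edges) ∧
      p1.support.length = s / 2 ∧ p2.support.length = s / 2 ∧
      p3.support.length = (s + 1) / 2 ∧ p4.support.length = (s + 1) / 2 := by
  set n1 : ℕ := s / 2 - 1 with hn1
  set n3 : ℕ := (s + 1) / 2 - 1 with hn3
  have hb1 : ((1:ℤ),(0:ℤ)).1 + 2*(n1:ℤ) ≤ (s:ℤ)-1 := by simp only []; omega
  have hb2 : ((1:ℤ),(1:ℤ)).1 + 2*(n1:ℤ) ≤ (s:ℤ)-1 := by simp only []; omega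
  have hb3 : ((0:ℤ),(0:ℤ)).1 + 2*(n3:ℤ) ≤ (s:ℤ)-1 := by simp only []; omega
  have hb4 : ((0:ℤ),(1:ℤ)).1 + 2*(n3:ℤ) ≤ (s:ℤ)-1 := by simp only []; omega
  set p1 := mkWalk s n1 (1,0) (by norm_num) hb1 (Or.inl rfl) with hp1
  set p2 := mkWalk s n1 (1,1) (by norm_num) hb2 (Or.inr rfl) with hp2
  set p3 := mkWalk s n3 (0,0) (by norm_num) hb3 (Or.inl rfl) with hp3
  set p4 := mkWalk s n3 (0,1) (by norm_num) hb4 (Or.inr rfl) with hp4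
  refine ⟨_, _, _, _, _, _, _, _, p1, p2, p3, p4,
    isPath_mkWalk .., isPath_mkWalk .., isPath_mkWalk .., isPath_mkWalk ..,
    ?_, ?_, ?_, ?_, ?_, ?_, ?_, ?_, ?_, ?_, ?_, ?_⟩
  · -- coverage
    intro v
    constructor
    · rintro ⟨h0, h1, h2⟩
      obtain ⟨c, i, hc, rfl, hfst⟩ := locate s v h0 h1 h2
      rcases hc with rfl | rfl | rfl | rfl
      · exact Or.inl (by
          rw [hp1, support_mkWalk]
          exact List.mem_map.mpr ⟨i, List.mem_range.mpr (by simp [fnc] at h1; omega), rfl⟩)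
      · exact Or.inr (Or.inl (by
          rw [hp2, support_mkWalk]
          exact List.mem_map.mpr ⟨i, List.mem_range.mpr (by simp [fnc] at h1; omega), rfl⟩))
      · exact Or.inr (Or.inr (Or.inl (by
          rw [hp3, support_mkWalk]
          exact List.mem_map.mpr ⟨i, List.mem_range.mpr (by simp [fnc] at h1; omega), rfl⟩)))
      · exact Or.inr (Or.inr (Or.inr (by
          rw [hp4, support_mkWalk]
          exact List.mem_map.mpr ⟨i, List.mem_range.mpr (by simp [fnc] at h1; omega), rfl⟩)))
    · rintro (h | h | h | h) <;>
        exact support_subset_twine _ _ _ _ _ _ _ h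
  · intro a ha hb
    rw [hp1, support_mkWalk] at ha; rw [hp2, support_mkWalk] at hb
    obtain ⟨i, -, rfl⟩ := List.mem_map.mp ha
    obtain ⟨j, -, hj⟩ := List.mem_map.mp hb
    simp only [fnc, Prod.mk.injEq] at hj
    rcases Nat.mod_two_eq_zero_or_one i with hi2 | hi2 <;>
      rcases Nat.mod_two_eq_zero_or_one j with hj2 | hj2 <;>
      simp [hi2, hj2] at hj <;> omega
  · intro a ha hb
    rw [hp1, support_mkWalk] at ha; rw [hp3, support_mkWalk] at hb
    obtain ⟨i, -, rfl⟩ := List.mem_map.mp ha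
    obtain ⟨j, -, hj⟩ := List.mem_map.mp hb
    simp only [fnc, Prod.mk.injEq] at hj
    omega
  · intro a ha hb
    rw [hp1, support_mkWalk] at ha; rw [hp4, support_mkWalk] at hb
    obtain ⟨i, -, rfl⟩ := List.mem_map.mp ha
    obtain ⟨j, -, hj⟩ := List.mem_map.mp hb
    simp only [fnc, Prod.mk.injEq] at hj
    omega
  · intro a ha hb
    rw [hp2, support_mkWalk] at ha; rw [hp3, support_mkWalk] at hb
    obtain ⟨i, -, rfl⟩ := List.mem_map.mp ha
    obtain ⟨j, -, hj⟩ := List.mem_map.mp hb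
    simp only [fnc, Prod.mk.injEq] at hj
    omega
  · intro a ha hb
    rw [hp2, support_mkWalk] at ha; rw [hp4, support_mkWalk] at hb
    obtain ⟨i, -, rfl⟩ := List.mem_map.mp ha
    obtain ⟨j, -, hj⟩ := List.mem_map.mp hb
    simp only [fnc, Prod.mk.injEq] at hj
    omega
  · intro a ha hb
    rw [hp3, support_mkWalk] at ha; rw [hp4, support_mkWalk] at hb
    obtain ⟨i, -, rfl⟩ := List.mem_map.mp ha
    obtain ⟨j, -, hj⟩ := List.mem_map.mp hb
    simp only [fnc, Prod.mk.injEq] at hj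
    rcases Nat.mod_two_eq_zero_or_one i with hi2 | hi2 <;>
      rcases Nat.mod_two_eq_zero_or_one j with hj2 | hj2 <;>
      simp [hi2, hj2] at hj <;> omega
  · -- edge coverage
    have key : ∀ u : Cell, 0 ≤ u.1 → u.1 + 2 ≤ (s:ℤ)-1 → (u.2 = 0 ∨ u.2 = 1) →
        s(u, stepc u) ∈ p1.edges ∨ s(u, stepc u) ∈ p2.edges ∨
        s(u, stepc u) ∈ p3.edges ∨ s(u, stepc u) ∈ p4.edges := by
      intro u h0 h1 h2
      obtain ⟨c, i, hc, rfl, hfst⟩ := locate s u h0 (by omega) h2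
      have hstep : stepc (fnc c i) = fnc c (i+1) := stepc_fnc c i
      rw [hstep]
      rcases hc with rfl | rfl | rfl | rfl
      · exact Or.inl (edge_mem_mkWalk s n1 _ _ _ _ i (by simp [fnc] at hfst h1; omega))
      · exact Or.inr (Or.inl (edge_mem_mkWalk s n1 _ _ _ _ i (by simp [fnc] at hfst h1; omega)))
      · exact Or.inr (Or.inr (Or.inl (edge_mem_mkWalk s n3 _ _ _ _ i (by simp [fnc] at hfst h1; omega))))
      · exact Or.inr (Or.inr (Or.inr (edge_mem_mkWalk s n3 _ _ _ _ i (by simp [fnc] at hfst h1; omega))))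
    rintro u v ⟨⟨hu0, hu1, hu2⟩, ⟨hv0, hv1, hv2⟩, hcase⟩
    rcases hcase with ⟨-, habs⟩ | ⟨hx, hy⟩
    · exfalso
      rcases (abs_eq (by norm_num)).mp habs with h | h <;> rcases hu2 with h' | h' <;>
        rcases hv2 with h'' | h'' <;> omega
    · have hy' : v.2 = 1 - u.2 := by
        rcases (abs_eq (by norm_num)).mp hy with h | h <;> omega
      rcases (abs_eq (by norm_num)).mp hx with h | h
      · -- u.1 - v.1 = 2, so u = stepc v
        have huv : u = stepc v := Prod.ext (by simp [stepc]; omega) (by simp [stepc]; omega)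
        have := key v hv0 (by omega) hv2
        rw [← huv] at this
        rw [Sym2.eq_swap] at this
        exact this
      · -- v = stepc u
        have huv : v = stepc u := Prod.ext (by simp [stepc]; omega) (by simp [stepc]; omega)
        rw [huv]
        exact key u hu0 (by omega) hu2
  · rw [hp1, support_mkWalk, List.length_map, List.length_range]; omega
  · rw [hp2, support_mkWalk, List.length_map, List.length_range]; omega
  · rw [hp3, support_mkWalk, List.length_map, List.length_range]; omega
  · rw [hp4, support_mkWalk, List.length_map, List.length_range]; omega
end

section
/- The knight graph on the 16-cell set S = { ε₁(2,1) + ε₂(1,2) + ε₃(−1,2) + ε₄(−2,1) : εᵢ ∈ {0,1} } is isomorphic to the 4-dimensional hypercube graph Q₄, and its maximum pseudosnake (2-independent set) has exactly 9 vertices. -/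
open SimpleGraph

/-- The 4-dimensional hypercube graph. -/
def Q4 : SimpleGraph (Fin 4 → Bool) where
  Adj x y := ∃! i, x i ≠ y i
  symm := by
    constructor
    rintro x y ⟨i, hi, hu⟩
    exact ⟨i, fun h => hi h.symm, fun j hj => hu j fun h => hj h.symm⟩
  loopless := by constructor; rintro x ⟨i, hi, -⟩; exact hi rfl

/-- The 16-cell set S_Tess. -/
def tess : Set Cell :=
  {a | ∃ e : Fin 4 → Bool,
    a = ((if e 0 then 2 else 0) + (if e 1 then 1 else 0) +
           (if e 2 then -1 else 0) + (if e 3 then -2 else 0),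
         (if e 0 then 1 else 0) + (if e 1 then 2 else 0) +
           (if e 2 then 2 else 0) + (if e 3 then 1 else 0))}

/-- The knight graph on S_Tess. -/
def knightTess : SimpleGraph {a : Cell // a ∈ tess} where
  Adj u v := (|u.1.1 - v.1.1| = 1 ∧ |u.1.2 - v.1.2| = 2) ∨
             (|u.1.1 - v.1.1| = 2 ∧ |u.1.2 - v.1.2| = 1)
  symm := by
    constructor
    rintro u v h
    rw [abs_sub_comm v.1.1 u.1.1, abs_sub_comm v.1.2 u.1.2]
    exact h
  loopless := by constructor; rintro u h; simp at h

/- ===================== auxiliary development ===================== -/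

def bb (b : Bool) : ℕ := cond b 1 0

def nb (b x y z w : Bool) : Bool := !b || decide (bb x + bb y + bb z + bb w ≤ 2)

def ok16 (b0 b1 b2 b3 b4 b5 b6 b7 b8 b9 b10 b11 b12 b13 b14 b15 : Bool) : Bool :=
  decide (bb b0 + bb b1 + bb b2 + bb b3 + bb b4 + bb b5 + bb b6 + bb b7 + bb b8 + bb b9 +
    bb b10 + bb b11 + bb b12 + bb b13 + bb b14 + bb b15 ≤ 9) ||
  !(nb b0 b1 b2 b4 b8 && nb b1 b0 b3 b5 b9 && nb b2 b3 b0 b6 b10 && nb b3 b2 b1 b7 b11 &&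
    nb b4 b5 b6 b0 b12 && nb b5 b4 b7 b1 b13 && nb b6 b7 b4 b2 b14 && nb b7 b6 b5 b3 b15 &&
    nb b8 b9 b10 b12 b0 && nb b9 b8 b11 b13 b1 && nb b10 b11 b8 b14 b2 && nb b11 b10 b9 b15 b3 &&
    nb b12 b13 b14 b8 b4 && nb b13 b12 b15 b9 b5 && nb b14 b15 b12 b10 b6 && nb b15 b14 b13 b11 b7)

set_option maxHeartbeats 400000000 in
theorem keyB : ∀ b0 b1 b2 b3 b4 b5 b6 b7 b8 b9 b10 b11 b12 b13 b14 b15 : Bool,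
    ok16 b0 b1 b2 b3 b4 b5 b6 b7 b8 b9 b10 b11 b12 b13 b14 b15 = true := by decide

def vcell (e : Fin 4 → Bool) : Cell :=
  ((if e 0 then 2 else 0) + (if e 1 then 1 else 0) + (if e 2 then -1 else 0) + (if e 3 then -2 else 0),
   (if e 0 then 1 else 0) + (if e 1 then 2 else 0) + (if e 2 then 2 else 0) + (if e 3 then 1 else 0))

def vtx (k : Fin 16) : Fin 4 → Bool := fun i => Nat.testBit k.val i.val

def adjB (k l : Fin 16) : Bool :=
  (k.val ^^^ l.val) == 1 || (k.val ^^^ l.val) == 2 || (k.val ^^^ l.val) == 4 || (k.val ^^^ l.val) == 8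

theorem einj : ∀ x y : Fin 4 → Bool, vcell x = vcell y → x = y := by decide

theorem vsurj : ∀ x : Fin 4 → Bool, ∃ k : Fin 16, vtx k = x := by decide

theorem vtxinj : ∀ k l : Fin 16, vtx k = vtx l → k = l := by decide

theorem adjK : ∀ k l : Fin 16,
    ((|(vcell (vtx k)).1 - (vcell (vtx l)).1| = 1 ∧ |(vcell (vtx k)).2 - (vcell (vtx l)).2| = 2) ∨
     (|(vcell (vtx k)).1 - (vcell (vtx l)).1| = 2 ∧ |(vcell (vtx k)).2 - (vcell (vtx l)).2| = 1))
    ↔ adjB k l = true := by decide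

theorem adjQ : ∀ k l : Fin 16,
    (∃ i, (vtx k i ≠ vtx l i) ∧ ∀ j, (vtx k j ≠ vtx l j) → j = i) ↔ adjB k l = true := by decide

def ee (x : Fin 4 → Bool) : {a : Cell // a ∈ tess} := ⟨vcell x, ⟨x, rfl⟩⟩

theorem ee_inj : Function.Injective ee := fun x y h => einj x y (congrArg Subtype.val h)

theorem ee_surj : Function.Surjective ee := by
  rintro ⟨a, x, hx⟩
  exact ⟨x, Subtype.ext hx.symm⟩

noncomputable def E : (Fin 4 → Bool) ≃ {a : Cell // a ∈ tess} :=
  Equiv.ofBijective ee ⟨ee_inj, ee_surj⟩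

theorem mri (x y : Fin 4 → Bool) : knightTess.Adj (ee x) (ee y) ↔ Q4.Adj x y := by
  obtain ⟨k, rfl⟩ := vsurj x
  obtain ⟨l, rfl⟩ := vsurj y
  exact (adjK k l).trans (adjQ k l).symm

noncomputable def theIso : Q4 ≃g knightTess :=
  { toEquiv := E, map_rel_iff' := @fun x y => mri x y }

/- counting lemmas -/

theorem my_sum_mono {α : Type*} (l : List α) (f g : α → ℕ) (h : ∀ x ∈ l, f x ≤ g x) :
    (l.map f).sum ≤ (l.map g).sum := by
  induction l with
  | nil => simp
  | cons a t ih =>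
    simp only [List.map_cons, List.sum_cons]
    exact Nat.add_le_add (h a (by simp)) (ih fun x hx => h x (by simp [hx]))

theorem ncard_le_listSum {α : Type*} (l : List α) (S : Set α) (h : ∀ x ∈ S, x ∈ l) :
    S.ncard ≤ (l.map fun x => (S ∩ {x}).ncard).sum := by
  induction l generalizing S with
  | nil =>
    have : S = ∅ := Set.eq_empty_iff_forall_notMem.2 fun x hx => by simpa using h x hx
    simp [this]
  | cons a t ih =>
    simp only [List.map_cons, List.sum_cons]
    have h1 : S.ncard ≤ (S ∩ {a}).ncard + (S \ {a}).ncard := by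
      by_cases ha : a ∈ S
      · have hins : S = insert a (S \ {a}) := by
          ext x; by_cases hxa : x = a <;> simp [hxa, ha]
        have h2 : (S ∩ {a}) = {a} := by ext x; by_cases hxa : x = a <;> simp [hxa, ha]
        calc S.ncard = (insert a (S \ {a})).ncard := by rw [← hins]
          _ ≤ (S \ {a}).ncard + 1 := Set.ncard_insert_le _ _
          _ = (S ∩ {a}).ncard + (S \ {a}).ncard := by rw [h2, Set.ncard_singleton]; omega
      · have h2 : (S ∩ {a}) = ∅ := by ext x; by_cases hxa : x = a <;> simp [hxa, ha]
        have h3 : S \ {a} = S := by ext x; by_cases hxa : x = a <;> simp [hxa, ha]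
        simp [h2, h3]
    have h4 := ih (S \ {a}) (fun x hx => by
      rcases List.mem_cons.1 (h x hx.1) with h' | h'
      · exact absurd h' hx.2
      · exact h')
    have h5 : ((t.map fun x => ((S \ {a}) ∩ {x}).ncard)).sum ≤ (t.map fun x => (S ∩ {x}).ncard).sum := by
      refine my_sum_mono _ _ _ fun x _ => ?_
      refine Set.ncard_le_ncard (fun y hy => ⟨hy.1.1, hy.2⟩) ?_
      exact (Set.finite_singleton x).subset Set.inter_subset_right
    omega

theorem listSum_le_ncard {α : Type*} (l : List α) (S : Set α) (hl : l.Nodup) (hS : S.Finite) :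
    (l.map fun x => (S ∩ {x}).ncard).sum ≤ S.ncard := by
  induction l generalizing S with
  | nil => simp
  | cons a t ih =>
    have hat : a ∉ t := (List.nodup_cons.1 hl).1
    have hnd : t.Nodup := (List.nodup_cons.1 hl).2
    simp only [List.map_cons, List.sum_cons]
    have hcongr : (t.map fun x => (S ∩ {x}).ncard) = t.map fun x => ((S \ {a}) ∩ {x}).ncard := by
      refine List.map_congr_left fun x hx => ?_
      have hxa : x ≠ a := fun h => hat (h ▸ hx)
      congr 1
      ext y
      constructor
      · rintro ⟨hyS, hyx⟩
        exact ⟨⟨hyS, by simp at hyx; simp [hyx, hxa]⟩, hyx⟩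
      · rintro ⟨⟨hyS, _⟩, hyx⟩; exact ⟨hyS, hyx⟩
    rw [hcongr]
    have h4 := ih (S \ {a}) hnd (hS.diff)
    by_cases ha : a ∈ S
    · have h2 : (S ∩ {a}) = {a} := by ext x; by_cases hxa : x = a <;> simp [hxa, ha]
      have h5 : (S \ {a}).ncard + 1 = S.ncard := Set.ncard_diff_singleton_add_one ha hS
      rw [h2, Set.ncard_singleton]
      omega
    · have h2 : (S ∩ {a}) = ∅ := by ext x; by_cases hxa : x = a <;> simp [hxa, ha]
      have h3 : S \ {a} = S := by ext x; by_cases hxa : x = a <;> simp [hxa, ha]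
      rw [h3] at h4
      rw [h2, h3, Set.ncard_empty]
      omega

theorem keyFin (S : Set (Fin 16)) (hdeg : ∀ k ∈ S, {l | l ∈ S ∧ adjB k l = true}.ncard ≤ 2) :
    S.ncard ≤ 9 := by
  classical
  set b : Fin 16 → Bool := fun k => decide (k ∈ S) with hbdef
  have hbb : ∀ k : Fin 16, (S ∩ {k}).ncard = bb (b k) := by
    intro k
    by_cases h : k ∈ S
    · have h2 : S ∩ {k} = {k} := by ext x; by_cases hx : x = k <;> simp [hx, h]
      simp [h2, bb, hbdef, h]
    · have h2 : S ∩ {k} = ∅ := by ext x; by_cases hx : x = k <;> simp [hx, h]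
      simp [h2, bb, hbdef, h]
  have hnb : ∀ k n1 n2 n3 n4 : Fin 16,
      adjB k n1 = true → adjB k n2 = true → adjB k n3 = true → adjB k n4 = true →
      ([n1, n2, n3, n4] : List (Fin 16)).Nodup →
      nb (b k) (b n1) (b n2) (b n3) (b n4) = true := by
    intro k n1 n2 n3 n4 h1 h2 h3 h4 hnd
    cases hbk : b k with
    | false => simp [nb]
    | true =>
      have hk : k ∈ S := of_decide_eq_true hbk
      have hd := hdeg k hk
      have hsum := listSum_le_ncard [n1, n2, n3, n4] {l | l ∈ S ∧ adjB k l = true} hnd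
        (Set.toFinite _)
      have heq : ∀ n : Fin 16, adjB k n = true →
          ({l | l ∈ S ∧ adjB k l = true} ∩ {n}).ncard = bb (b n) := by
        intro n hn
        rw [← hbb n]
        congr 1
        ext y
        constructor
        · rintro ⟨⟨hy, _⟩, hy2⟩; exact ⟨hy, hy2⟩
        · rintro ⟨hy, hy2⟩
          refine ⟨⟨hy, ?_⟩, hy2⟩
          simp only [Set.mem_singleton_iff] at hy2
          rw [hy2]; exact hn
      simp only [List.map_cons, List.map_nil, List.sum_cons, List.sum_nil] at hsum
      rw [heq n1 h1, heq n2 h2, heq n3 h3, heq n4 h4] at hsum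
      have hle : bb (b n1) + bb (b n2) + bb (b n3) + bb (b n4) ≤ 2 := by omega
      simp [nb, hle]
  have c0 := hnb 0 1 2 4 8 rfl rfl rfl rfl (by decide)
  have c1 := hnb 1 0 3 5 9 rfl rfl rfl rfl (by decide)
  have c2 := hnb 2 3 0 6 10 rfl rfl rfl rfl (by decide)
  have c3 := hnb 3 2 1 7 11 rfl rfl rfl rfl (by decide)
  have c4 := hnb 4 5 6 0 12 rfl rfl rfl rfl (by decide)
  have c5 := hnb 5 4 7 1 13 rfl rfl rfl rfl (by decide)
  have c6 := hnb 6 7 4 2 14 rfl rfl rfl rfl (by decide)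
  have c7 := hnb 7 6 5 3 15 rfl rfl rfl rfl (by decide)
  have c8 := hnb 8 9 10 12 0 rfl rfl rfl rfl (by decide)
  have c9 := hnb 9 8 11 13 1 rfl rfl rfl rfl (by decide)
  have c10 := hnb 10 11 8 14 2 rfl rfl rfl rfl (by decide)
  have c11 := hnb 11 10 9 15 3 rfl rfl rfl rfl (by decide)
  have c12 := hnb 12 13 14 8 4 rfl rfl rfl rfl (by decide)
  have c13 := hnb 13 12 15 9 5 rfl rfl rfl rfl (by decide)
  have c14 := hnb 14 15 12 10 6 rfl rfl rfl rfl (by decide)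
  have c15 := hnb 15 14 13 11 7 rfl rfl rfl rfl (by decide)
  have hub := ncard_le_listSum
    ([0,1,2,3,4,5,6,7,8,9,10,11,12,13,14,15] : List (Fin 16)) S
    (fun x _ => by fin_cases x <;> decide)
  simp only [List.map_cons, List.map_nil, List.sum_cons, List.sum_nil] at hub
  simp only [hbb] at hub
  have hok := keyB (b 0) (b 1) (b 2) (b 3) (b 4) (b 5) (b 6) (b 7) (b 8) (b 9) (b 10) (b 11)
    (b 12) (b 13) (b 14) (b 15)
  rw [ok16, c0, c1, c2, c3, c4, c5, c6, c7, c8, c9, c10, c11, c12, c13, c14, c15] at hok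
  simp only [Bool.and_self, Bool.and_true, Bool.not_true, Bool.or_false] at hok
  have h9 := of_decide_eq_true hok
  omega

def w16 (k : Fin 16) : {a : Cell // a ∈ tess} := ee (vtx k)

theorem w16_inj : Function.Injective w16 := fun k l h => vtxinj k l (ee_inj h)

theorem w16_surj : Function.Surjective w16 := by
  intro u
  obtain ⟨x, hx⟩ := ee_surj u
  obtain ⟨k, hk⟩ := vsurj x
  exact ⟨k, by rw [w16, hk, hx]⟩

theorem adjT : ∀ k l : Fin 16, knightTess.Adj (w16 k) (w16 l) ↔ adjB k l = true :=
  fun k l => adjK k l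

def F9 : Finset (Fin 16) := {0, 1, 2, 5, 6, 11, 12, 13, 14}

theorem filterF9 : ∀ k ∈ F9, (F9.filter fun l => adjB k l = true).card ≤ 2 := by decide

theorem cardF9 : F9.card = 9 := by decide

theorem P9mem : 9 ∈ {m : ℕ | ∃ P : Set {a : Cell // a ∈ tess},
    (∀ u ∈ P, Set.ncard {v | v ∈ P ∧ knightTess.Adj u v} ≤ 2) ∧ P.ncard = m} := by
  refine ⟨w16 '' ↑F9, ?_, ?_⟩
  · rintro u ⟨k, hk, rfl⟩
    have hkF : k ∈ F9 := hk
    have hset : {v | v ∈ w16 '' ↑F9 ∧ knightTess.Adj (w16 k) v} =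
        w16 '' ↑(F9.filter fun l => adjB k l = true) := by
      ext v
      simp only [Set.mem_setOf_eq, Set.mem_image, Finset.mem_coe, Finset.mem_filter]
      constructor
      · rintro ⟨⟨l, hl, rfl⟩, hadj⟩
        exact ⟨l, ⟨hl, (adjT k l).mp hadj⟩, rfl⟩
      · rintro ⟨l, ⟨hl, hB⟩, rfl⟩
        exact ⟨⟨l, hl, rfl⟩, (adjT k l).mpr hB⟩
    rw [hset, Set.ncard_image_of_injective _ w16_inj, Set.ncard_coe_finset]
    exact filterF9 k hkF
  · rw [Set.ncard_image_of_injective _ w16_inj, Set.ncard_coe_finset, cardF9]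

/-- the knight graph on S_Tess is isomorphic to Q₄, and its maximum
pseudosnake has exactly 9 vertices. -/
theorem tess_hypercube :
    Nonempty (Q4 ≃g knightTess) ∧
    IsGreatest {m : ℕ | ∃ P : Set {a : Cell // a ∈ tess},
      (∀ u ∈ P, Set.ncard {v | v ∈ P ∧ knightTess.Adj u v} ≤ 2) ∧ P.ncard = m} 9 := by
  refine ⟨⟨theIso⟩, ⟨P9mem, ?_⟩⟩
  · rintro m ⟨P, hdeg, rfl⟩
    set T : Set (Fin 16) := w16 ⁻¹' P with hT
    have hPT : w16 '' T = P := Set.image_preimage_eq P w16_surj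
    have hc : P.ncard = T.ncard := by
      rw [← hPT, Set.ncard_image_of_injective _ w16_inj]
    have hdeg' : ∀ k ∈ T, {l | l ∈ T ∧ adjB k l = true}.ncard ≤ 2 := by
      intro k hk
      have h2 := hdeg (w16 k) hk
      have hset : {v | v ∈ P ∧ knightTess.Adj (w16 k) v} =
          w16 '' {l | l ∈ T ∧ adjB k l = true} := by
        ext v
        constructor
        · rintro ⟨hvP, hadj⟩
          obtain ⟨l, rfl⟩ := w16_surj v
          exact ⟨l, ⟨hvP, (adjT k l).mp hadj⟩, rfl⟩
        · rintro ⟨l, ⟨hlT, hB⟩, rfl⟩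
          exact ⟨hlT, (adjT k l).mpr hB⟩
      rw [hset, Set.ncard_image_of_injective _ w16_inj] at h2
      exact h2
    rw [hc]
    exact keyFin T hdeg'
end
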